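/- Let γ, κ, λ > 0 and η ∈ (0, 1]. If λ ≥ (3/2) · min(γ, κ)/η², then q₀(λ, γ, κ) ≤ η. That is, in a two-sided FIFO queue with flow balance (equal buyer and seller arrival rates λ) and exponential abandonment rates κ for buyers and γ for sellers, a flow lower bound of λ ≥ (3/2)·min(γ,κ)/η² guarantees abandonment probability at most η. -/

import Mathlib

/-- Partial product `P n c = ∏_{j=1}^{n} 1/(1 + j·c)`, with `P 0 c = 1`. -/
noncomputable def partialProd (n : ℕ) (c : ℝ) : ℝ :=
  ∏ j ∈ Finset.Icc 1 n, (1 + (j : ℝ) * c)⁻¹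

/-- The empty-queue (abandonment) probability of the balanced two-sided FIFO
queue with arrival rate `λ` and abandonment rates `γ` (sellers), `κ` (buyers):
`q₀(λ, γ, κ) = (1 + ∑_{n=1}^∞ [P_n(γ/λ) + P_n(κ/λ)])⁻¹`. -/
noncomputable def q0 (lam gam kap : ℝ) : ℝ :=
  (1 + ∑' n : ℕ, (partialProd (n + 1) (gam / lam) + partialProd (n + 1) (kap / lam)))⁻¹

lemma pp_pos {c : ℝ} (hc : 0 ≤ c) (n : ℕ) : 0 < partialProd n c := by
  apply Finset.prod_pos
  intro j hj
  have : (0:ℝ) ≤ (j:ℝ) * c := mul_nonneg (Nat.cast_nonneg j) hc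
  positivity

lemma pp_succ (n : ℕ) (c : ℝ) :
    partialProd (n+1) c = partialProd n c * (1 + ((n:ℝ)+1) * c)⁻¹ := by
  unfold partialProd
  rw [Finset.prod_Icc_succ_top (by omega)]
  push_cast; ring

lemma pp_lower {c : ℝ} (hc : 0 ≤ c) (n : ℕ) :
    1 - c * (n * (n+1) / 2) ≤ partialProd n c := by
  induction n with
  | zero => simp [partialProd]
  | succ n ih =>
    rw [pp_succ]
    have hpos := pp_pos hc n
    have hf : (0:ℝ) < 1 + ((n:ℝ)+1) * c := by positivity
    rcases le_or_gt (1 - c * ((n+1) * ((n:ℝ)+1+1) / 2)) 0 with h | h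
    · have : 0 < partialProd n c * (1 + ((n:ℝ)+1) * c)⁻¹ := by positivity
      push_cast
      nlinarith
    · have expand : (1 - c * (((n:ℝ)+1) * ((n:ℝ)+2) / 2)) * (1 + ((n:ℝ)+1)*c)
          = 1 - c * ((n:ℝ)*((n:ℝ)+1)/2) - c*c*((((n:ℝ)+1)*((n:ℝ)+2)/2)*((n:ℝ)+1)) := by ring
      have hnn : 0 ≤ c*c*((((n:ℝ)+1)*((n:ℝ)+2)/2)*((n:ℝ)+1)) := by positivity
      have hdiv : 1 - c * (((n:ℝ)+1) * ((n:ℝ)+2) / 2) ≤ partialProd n c / (1 + ((n:ℝ)+1)*c) := by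
        rw [le_div_iff₀ hf, expand]; linarith
      rw [div_eq_mul_inv] at hdiv
      calc 1 - c * (↑(n+1) * (↑(n+1)+1) / 2) = 1 - c * (((n:ℝ)+1) * ((n:ℝ)+2) / 2) := by
            push_cast; ring
        _ ≤ _ := hdiv

lemma pp_le_geom {c : ℝ} (hc : 0 < c) (n : ℕ) :
    partialProd n c ≤ ((1+c)⁻¹) ^ n := by
  unfold partialProd
  calc ∏ j ∈ Finset.Icc 1 n, (1 + (j:ℝ) * c)⁻¹
      ≤ ∏ j ∈ Finset.Icc 1 n, (1+c)⁻¹ := by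
        apply Finset.prod_le_prod
        · intro j hj
          have : (0:ℝ) ≤ (j:ℝ)*c := by positivity
          positivity
        · intro j hj
          apply inv_anti₀ (by linarith)
          have h1 : 1 ≤ j := (Finset.mem_Icc.mp hj).1
          have : (1:ℝ) ≤ (j:ℝ) := by exact_mod_cast h1
          nlinarith
    _ = ((1+c)⁻¹) ^ n := by rw [Finset.prod_const, Nat.card_Icc]; norm_num

lemma pp_summable {c : ℝ} (hc : 0 < c) :
    Summable (fun n : ℕ => partialProd (n+1) c) := by
  have hr : (1+c)⁻¹ < 1 := by
    rw [inv_lt_one_iff₀]; right; linarith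
  have hr0 : (0:ℝ) ≤ (1+c)⁻¹ := by positivity
  apply Summable.of_nonneg_of_le (fun n => (pp_pos hc.le (n+1)).le)
    (fun n => (pp_le_geom hc (n+1)).trans_eq (pow_succ _ _))
  exact (summable_geometric_of_lt_one hr0 hr).mul_right _

lemma sum_tri (N : ℕ) :
    ∑ n ∈ Finset.range N, (((n:ℝ)+1)*((n:ℝ)+2)/2) = (N:ℝ)*((N:ℝ)+1)*((N:ℝ)+2)/6 := by
  induction N with
  | zero => simp
  | succ N ih => rw [Finset.sum_range_succ, ih]; push_cast; ring

lemma arith (η x : ℝ) (hη0 : 0 < η) (hη1 : η ≤ 1) (hx1 : 1 ≤ x)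
    (hxle : x ≤ 7/(5*η)) (hxgt : 7/(5*η) < x + 1) :
    1/η - 1 ≤ x - (2/3*η^2) * (x*(x+1)*(x+2)/6) := by
  have h5 : (0:ℝ) < 5*η := by linarith
  rw [le_div_iff₀ h5] at hxle
  rw [div_lt_iff₀ h5] at hxgt
  rw [div_sub' hη0.ne', div_le_iff₀ hη0]
  nlinarith [mul_pos hη0 (lt_of_lt_of_le one_pos hx1), sq_nonneg (η*x),
    mul_nonneg (mul_nonneg hη0.le hη0.le) hη0.le,
    mul_le_of_le_one_left (le_of_lt hη0) hη1,
    mul_nonneg (sub_nonneg.mpr hxle) hη0.le,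
    sq_nonneg (η*x - 7/5), sq_nonneg (η - 1), mul_pos h5 hη0]

/-- if `λ ≥ (3/2)·min(γ,κ)/η²`, then the abandonment probability
`q₀(λ, γ, κ)` is at most `η`. -/
theorem statement7 (lam gam kap η : ℝ) (hlam : 0 < lam) (hgam : 0 < gam) (hkap : 0 < kap)
    (hη : η ∈ Set.Ioc (0 : ℝ) 1)
    (hflow : lam ≥ 3 / 2 * min gam kap / η ^ 2) :
    q0 lam gam kap ≤ η := by
  obtain ⟨hη0, hη1⟩ := hη
  set m := min gam kap with hm_def
  have hm : 0 < m := lt_min hgam hkap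
  set c := m / lam with hc_def
  have hc0 : 0 < c := div_pos hm hlam
  have hcle : c ≤ 2/3 * η^2 := by
    rw [ge_iff_le, div_le_iff₀ (pow_pos hη0 2)] at hflow
    rw [hc_def, div_le_iff₀ hlam]
    nlinarith
  have hS1 := pp_summable (div_pos hgam hlam)
  have hS2 := pp_summable (div_pos hkap hlam)
  have hS := hS1.add hS2
  set N := ⌊7/(5*η)⌋₊ with hN_def
  have h75 : (1:ℝ) ≤ 7/(5*η) := by
    rw [le_div_iff₀ (by linarith)]; linarith
  have hN1 : 1 ≤ N := Nat.le_floor (by exact_mod_cast h75)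
  have hx1 : (1:ℝ) ≤ (N:ℝ) := by exact_mod_cast hN1
  have hNle : (N:ℝ) ≤ 7/(5*η) := Nat.floor_le (by positivity)
  have hNgt : 7/(5*η) < (N:ℝ) + 1 := Nat.lt_floor_add_one _
  have key : ∀ n : ℕ, partialProd (n+1) c ≤
      partialProd (n+1) (gam/lam) + partialProd (n+1) (kap/lam) := by
    intro n
    rcases min_choice gam kap with h | h
    · have hc : c = gam/lam := by rw [hc_def, hm_def, h]
      rw [hc]; linarith [pp_pos (div_pos hkap hlam).le (n+1)]
    · have hc : c = kap/lam := by rw [hc_def, hm_def, h]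
      rw [hc]; linarith [pp_pos (div_pos hgam hlam).le (n+1)]
  set S := ∑' n : ℕ, (partialProd (n+1) (gam/lam) + partialProd (n+1) (kap/lam)) with hS_def
  have hSge : 1/η - 1 ≤ S := by
    have step1 : ∑ n ∈ Finset.range N, partialProd (n+1) c ≤ S := by
      calc ∑ n ∈ Finset.range N, partialProd (n+1) c
          ≤ ∑ n ∈ Finset.range N, (partialProd (n+1) (gam/lam) + partialProd (n+1) (kap/lam)) :=
            Finset.sum_le_sum fun n _ => key n
        _ ≤ S := Summable.sum_le_tsum _
            (fun n _ => add_nonneg (pp_pos (div_pos hgam hlam).le _).le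
              (pp_pos (div_pos hkap hlam).le _).le) hS
    have step2 : (N:ℝ) - c * ((N:ℝ)*((N:ℝ)+1)*((N:ℝ)+2)/6) ≤
        ∑ n ∈ Finset.range N, partialProd (n+1) c := by
      have heq : (N:ℝ) - c * ((N:ℝ)*((N:ℝ)+1)*((N:ℝ)+2)/6) =
          ∑ n ∈ Finset.range N, (1 - c * (((n:ℝ)+1)*((n:ℝ)+2)/2)) := by
        rw [Finset.sum_sub_distrib, Finset.sum_const, ← Finset.mul_sum, sum_tri]
        simp
      rw [heq]
      apply Finset.sum_le_sum
      intro n _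
      have h := pp_lower hc0.le (n+1)
      push_cast at h
      have : c * (((n:ℝ)+1)*((n:ℝ)+2)/2) = c * (((n:ℝ)+1) * (((n:ℝ)+1)+1) / 2) := by ring
      rw [this]; linarith
    have step3 : (N:ℝ) - (2/3*η^2) * ((N:ℝ)*((N:ℝ)+1)*((N:ℝ)+2)/6) ≤
        (N:ℝ) - c * ((N:ℝ)*((N:ℝ)+1)*((N:ℝ)+2)/6) := by
      have hcube : (0:ℝ) ≤ (N:ℝ)*((N:ℝ)+1)*((N:ℝ)+2)/6 := by positivity
      nlinarith
    linarith [arith η (N:ℝ) hη0 hη1 hx1 hNle hNgt]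
  have h1S : 1/η ≤ 1 + S := by linarith
  have hpos : (0:ℝ) < 1/η := by positivity
  have := inv_anti₀ hpos h1S
  rw [one_div, inv_inv] at this
  exact this
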